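/- arXiv:1712.00541 — 2 statements merged into one kernel-verified Lean document; each statement's English description precedes it below -/
import Mathlib

section
/- Let γ : ℝ^d → ℝ be C^1 with γ(t) ≥ c > 0 for all t and with bounded partial derivatives. Then there exists δ₁ > 0 such that for every t ∈ ℝ^d, the map v ↦ v·γ(t − v) is injective on [−δ₁, δ₁]^d. -/
/-- If `γ : ℝ^d → ℝ` is C¹, bounded below by `c > 0`, with bounded first partial
derivatives, then there is `δ₁ > 0` such that `v ↦ γ(t − v) • v` is injective on
`[−δ₁, δ₁]^d`, for every `t`. -/
theorem injOn_scaled_map (d : ℕ) (γ : EuclideanSpace ℝ (Fin d) → ℝ) (c M : ℝ)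
    (hc : 0 < c) (hγ : ContDiff ℝ 1 γ) (hlb : ∀ t, c ≤ γ t)
    (hM : ∀ t, ‖fderiv ℝ γ t‖ ≤ M) :
    ∃ δ₁ : ℝ, 0 < δ₁ ∧ ∀ t : EuclideanSpace ℝ (Fin d),
      Set.InjOn (fun v : EuclideanSpace ℝ (Fin d) => γ (t - v) • v)
        {v : EuclideanSpace ℝ (Fin d) | ∀ i, |v i| ≤ δ₁} := by
  have hM0 : 0 ≤ M := le_trans (norm_nonneg _) (hM 0)
  have hs : (0:ℝ) ≤ Real.sqrt d := Real.sqrt_nonneg _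
  set δ₁ : ℝ := c / (2 * (M + 1) * (Real.sqrt d + 1)) with hδ
  have hpos : 0 < 2 * (M + 1) * (Real.sqrt d + 1) := by positivity
  have hδpos : 0 < δ₁ := div_pos hc hpos
  refine ⟨δ₁, hδpos, fun t v hv w hw hvw => ?_⟩
  simp only [Set.mem_setOf_eq] at hv hw
  -- Lipschitz bound for γ
  have hlip : ∀ a b : EuclideanSpace ℝ (Fin d), |γ a - γ b| ≤ M * ‖a - b‖ := by
    intro a b
    have := (convex_univ (𝕜 := ℝ) (E := EuclideanSpace ℝ (Fin d))).norm_image_sub_le_of_norm_fderiv_le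
      (fun x _ => (hγ.differentiable one_ne_zero).differentiableAt)
      (fun x _ => hM x) (Set.mem_univ b) (Set.mem_univ a)
    simpa [Real.norm_eq_abs] using this
  -- bound on ‖w‖
  have hwnorm : ‖w‖ ≤ Real.sqrt d * δ₁ := by
    rw [EuclideanSpace.norm_eq]
    have h1 : ∑ i, ‖w i‖ ^ 2 ≤ (d : ℝ) * δ₁ ^ 2 := by
      calc ∑ i, ‖w i‖ ^ 2 ≤ ∑ _i : Fin d, δ₁ ^ 2 := by
            refine Finset.sum_le_sum fun i _ => ?_
            have := hw i
            have h2 : ‖w i‖ ≤ δ₁ := by simpa [Real.norm_eq_abs] using this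
            exact pow_le_pow_left₀ (norm_nonneg _) h2 2
        _ = (d : ℝ) * δ₁ ^ 2 := by simp [Finset.sum_const, mul_comm]
    calc Real.sqrt (∑ i, ‖w i‖ ^ 2) ≤ Real.sqrt ((d : ℝ) * δ₁ ^ 2) := Real.sqrt_le_sqrt h1
      _ = Real.sqrt d * δ₁ := by
          rw [Real.sqrt_mul (Nat.cast_nonneg d), Real.sqrt_sq hδpos.le]
  -- key identity
  have hkey : γ (t - v) • (v - w) = (γ (t - w) - γ (t - v)) • w := by
    simp only at hvw
    rw [smul_sub, sub_smul, hvw]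
  by_contra hne
  have hvwne : v - w ≠ 0 := sub_ne_zero_of_ne hne
  have hvwpos : 0 < ‖v - w‖ := norm_pos_iff.mpr hvwne
  have hnorms : |γ (t - v)| * ‖v - w‖ = |γ (t - w) - γ (t - v)| * ‖w‖ := by
    have := congrArg norm hkey
    simpa [norm_smul, Real.norm_eq_abs] using this
  have h1 : c * ‖v - w‖ ≤ |γ (t - v)| * ‖v - w‖ := by
    apply mul_le_mul_of_nonneg_right _ (norm_nonneg _)
    exact le_trans (hlb _) (le_abs_self _)
  have h2 : |γ (t - w) - γ (t - v)| ≤ M * ‖v - w‖ := by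
    have := hlip (t - w) (t - v)
    have heq : (t - w) - (t - v) = v - w := by abel
    rwa [heq] at this
  have h3 : |γ (t - w) - γ (t - v)| * ‖w‖ ≤ M * ‖v - w‖ * (Real.sqrt d * δ₁) :=
    mul_le_mul h2 hwnorm (norm_nonneg _) (by positivity)
  have h4 : c * ‖v - w‖ ≤ M * ‖v - w‖ * (Real.sqrt d * δ₁) := by
    calc c * ‖v - w‖ ≤ |γ (t - v)| * ‖v - w‖ := h1
      _ = |γ (t - w) - γ (t - v)| * ‖w‖ := hnorms
      _ ≤ M * ‖v - w‖ * (Real.sqrt d * δ₁) := h3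
  have h5 : c ≤ M * (Real.sqrt d * δ₁) := by
    have := (mul_le_mul_iff_of_pos_right hvwpos).mp (by linarith [h4] : c * ‖v - w‖ ≤ (M * (Real.sqrt d * δ₁)) * ‖v - w‖)
    exact this
  have h6 : M * (Real.sqrt d * δ₁) < c := by
    have hlt : M * Real.sqrt d < 2 * (M + 1) * (Real.sqrt d + 1) := by nlinarith
    have : M * (Real.sqrt d * δ₁) = (M * Real.sqrt d) * (c / (2 * (M + 1) * (Real.sqrt d + 1))) := by
      rw [hδ]; ring
    rw [this, div_eq_mul_inv, ← mul_assoc]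
    calc M * Real.sqrt d * c * (2 * (M + 1) * (Real.sqrt d + 1))⁻¹
        < 2 * (M + 1) * (Real.sqrt d + 1) * c * (2 * (M + 1) * (Real.sqrt d + 1))⁻¹ := by
          apply mul_lt_mul_of_pos_right _ (inv_pos.mpr hpos)
          exact mul_lt_mul_of_pos_right hlt hc
      _ = c := by field_simp
  linarith
end

section
/- Let K : ℝ^d → ℝ be continuous, compactly supported, and γ : ℝ^d → ℝ continuous with c ≤ γ ≤ C, f continuous bounded density. Then for fixed t with f continuous at t and γ continuous at t, h^{−d} ∫ γ^{2d}(s) f(s) K²(h^{−1}γ(s)(t−s)) ds → γ^d(t) f(t) ∫ K²(u) du as h → 0⁺. -/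
open MeasureTheory Filter Metric

/-- Leading term of the second moment expansion:
`h^{−d} ∫ γ^{2d}(s) f(s) K²(h⁻¹γ(s)(t−s)) ds → γ^d(t) f(t) ∫ K²` as `h → 0⁺`. -/
theorem second_moment_leading_term (d : ℕ) (hd : 1 ≤ d)
    (K f γ : EuclideanSpace ℝ (Fin d) → ℝ) (c C : ℝ) (hc : 0 < c)
    (hK : Continuous K) (hKc : HasCompactSupport K)
    (hγc : Continuous γ) (hγ : ∀ x, c ≤ γ x ∧ γ x ≤ C)
    (hf : Continuous f) (hfb : ∃ M, ∀ x, f x ≤ M) (hf0 : ∀ x, 0 ≤ f x)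
    (hf1 : ∫ x, f x = 1) (t : EuclideanSpace ℝ (Fin d)) :
    Tendsto (fun h : ℝ =>
        (h ^ d)⁻¹ * ∫ s : EuclideanSpace ℝ (Fin d),
          (γ s) ^ (2 * d) * f s * (K (h⁻¹ • (γ s • (t - s)))) ^ 2)
      (nhdsWithin 0 (Set.Ioi 0))
      (nhds ((γ t) ^ d * f t * ∫ u : EuclideanSpace ℝ (Fin d), (K u) ^ 2)) := by
  classical
  obtain ⟨M, hM⟩ := hfb
  obtain ⟨R, hR⟩ := hKc.isBounded.subset_closedBall (0 : EuclideanSpace ℝ (Fin d))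
  obtain ⟨B, hB⟩ := hKc.exists_bound_of_continuous hK
  have hγ0 : ∀ x, 0 < γ x := fun x => lt_of_lt_of_le hc (hγ x).1
  have hC : 0 < C := lt_of_lt_of_le (hγ0 t) (hγ t).2
  have hM0 : 0 ≤ M := le_trans (hf0 t) (hM t)
  have hfr : Module.finrank ℝ (EuclideanSpace ℝ (Fin d)) = d := finrank_euclideanSpace_fin
  set g : ℝ → EuclideanSpace ℝ (Fin d) → ℝ := fun h v =>
    γ (t - h • v) ^ (2 * d) * f (t - h • v) * K (γ (t - h • v) • v) ^ 2 with hg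
  -- Step 1: change of variables for positive h
  have step1 : ∀ h : ℝ, 0 < h →
      (h ^ d)⁻¹ * (∫ s, γ s ^ (2 * d) * f s * K (h⁻¹ • (γ s • (t - s))) ^ 2)
        = ∫ v, g h v := by
    intro h hh
    set F : EuclideanSpace ℝ (Fin d) → ℝ :=
      fun s => γ s ^ (2 * d) * f s * K (h⁻¹ • (γ s • (t - s))) ^ 2 with hF
    have e1 : ∀ v, g h v = F (t - h • v) := by
      intro v
      simp only [hg, hF, sub_sub_cancel]
      congr 3
      rw [smul_smul, smul_smul]
      congr 1
      field_simp
    have c2 : (∫ v, F (t - h • v)) = |(h ^ d)⁻¹| • ∫ w, (fun w => F (t - w)) w := by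
      have := MeasureTheory.Measure.integral_comp_smul (volume)
        (fun w => F (t - w)) h
      rw [hfr] at this
      simpa using this
    have c3 : (∫ w, F (t - w)) = ∫ s, F s :=
      integral_sub_left_eq_self F volume t
    have c4 : (∫ v, g h v) = ∫ v, F (t - h • v) := by
      exact integral_congr_ae (Filter.Eventually.of_forall e1)
    rw [c4, c2]
    simp only [c3, smul_eq_mul, abs_of_pos (inv_pos.2 (pow_pos hh d))]
  -- continuity of g h
  have cont_g : ∀ h : ℝ, Continuous (g h) := by
    intro h
    have h1 : Continuous fun v : EuclideanSpace ℝ (Fin d) => t - h • v :=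
      continuous_const.sub (continuous_const_smul h)
    exact (((hγc.comp h1).pow _).mul (hf.comp h1)).mul
      ((hK.comp ((hγc.comp h1).smul continuous_id)).pow 2)
  -- dominating function
  set bound : EuclideanSpace ℝ (Fin d) → ℝ :=
    (closedBall (0 : EuclideanSpace ℝ (Fin d)) (R / c)).indicator
      (fun _ => C ^ (2 * d) * M * B ^ 2) with hbound
  have bound_int : Integrable bound := by
    apply IntegrableOn.integrable_indicator _ measurableSet_closedBall
    exact integrableOn_const measure_closedBall_lt_top.ne
  have hKB : ∀ y, K y ^ 2 ≤ B ^ 2 := by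
    intro y
    have h1 : |K y| ≤ B := by simpa [Real.norm_eq_abs] using hB y
    calc K y ^ 2 = |K y| ^ 2 := (sq_abs _).symm
      _ ≤ B ^ 2 := pow_le_pow_left₀ (abs_nonneg _) h1 2
  have h_bound : ∀ (h : ℝ) (v : EuclideanSpace ℝ (Fin d)), ‖g h v‖ ≤ bound v := by
    intro h v
    have hx : True := trivial
    by_cases hv : v ∈ closedBall (0 : EuclideanSpace ℝ (Fin d)) (R / c)
    · have hnn : 0 ≤ g h v :=
        mul_nonneg (mul_nonneg (pow_nonneg (hγ0 (t - h • v)).le _) (hf0 _)) (sq_nonneg _)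
      rw [Real.norm_of_nonneg hnn, hbound, Set.indicator_of_mem hv]
      have h1 : γ (t - h • v) ^ (2 * d) ≤ C ^ (2 * d) :=
        pow_le_pow_left₀ (hγ0 _).le (hγ _).2 _
      exact mul_le_mul (mul_le_mul h1 (hM _) (hf0 _) (pow_nonneg hC.le _)) (hKB _)
        (sq_nonneg _) (mul_nonneg (pow_nonneg hC.le _) hM0)
    · have hvn : R / c < ‖v‖ := by
        simpa [dist_eq_norm, not_le] using hv
      have hnot : γ (t - h • v) • v ∉ tsupport K := by
        intro hmem
        have h1 : ‖γ (t - h • v) • v‖ ≤ R := by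
          simpa [dist_eq_norm] using hR hmem
        have h2 : R < c * ‖v‖ := by
          rwa [div_lt_iff₀ hc, mul_comm] at hvn
        have h3 : c * ‖v‖ ≤ ‖γ (t - h • v) • v‖ := by
          rw [norm_smul, Real.norm_eq_abs, abs_of_pos (hγ0 _)]
          exact mul_le_mul_of_nonneg_right (hγ _).1 (norm_nonneg v)
        linarith
      have hK0 : K (γ (t - h • v) • v) = 0 := image_eq_zero_of_notMem_tsupport hnot
      have hgv : g h v = 0 := by
        simp only [hg, hK0]
        ring
      rw [hgv, hbound, Set.indicator_of_notMem hv, norm_zero]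
  -- pointwise convergence
  have h_lim : ∀ v : EuclideanSpace ℝ (Fin d),
      Tendsto (fun h : ℝ => g h v) (nhdsWithin 0 (Set.Ioi 0)) (nhds (g 0 v)) := by
    intro v
    have h1 : Continuous fun h : ℝ => t - h • v :=
      continuous_const.sub (continuous_id.smul continuous_const)
    have h2 : Continuous fun h : ℝ => g h v :=
      (((hγc.comp h1).pow _).mul (hf.comp h1)).mul
        ((hK.comp ((hγc.comp h1).smul continuous_const)).pow 2)
    exact (h2.tendsto 0).mono_left nhdsWithin_le_nhds
  -- Step 2: dominated convergence
  have step2 : Tendsto (fun h : ℝ => ∫ v, g h v) (nhdsWithin 0 (Set.Ioi 0))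
      (nhds (∫ v, g 0 v)) := by
    refine tendsto_integral_filter_of_dominated_convergence bound
      (Filter.Eventually.of_forall fun h => (cont_g h).aestronglyMeasurable)
      (Filter.Eventually.of_forall fun h => ae_of_all _ (h_bound h))
      bound_int (ae_of_all _ h_lim)
  -- Step 3: compute the limit integral
  have step3 : (∫ v, g 0 v) = γ t ^ d * f t * ∫ u, K u ^ 2 := by
    have e0 : ∀ v, g 0 v = (γ t ^ (2 * d) * f t) * (fun u => K u ^ 2) (γ t • v) := by
      intro v
      simp [hg, zero_smul, sub_zero]
    have c1 : (∫ v, g 0 v) = (γ t ^ (2 * d) * f t) * ∫ v, (fun u => K u ^ 2) (γ t • v) := by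
      rw [integral_congr_ae (Filter.Eventually.of_forall e0)]
      exact integral_const_mul _ _
    have c2 : (∫ v, (fun u => K u ^ 2) (γ t • v)) = ((γ t) ^ d)⁻¹ * ∫ u, K u ^ 2 := by
      have := MeasureTheory.Measure.integral_comp_smul (volume)
        (fun u => K u ^ 2) (γ t)
      rw [hfr] at this
      rw [this, smul_eq_mul, abs_of_pos (inv_pos.2 (pow_pos (hγ0 t) d))]
    rw [c1, c2]
    have hne : (γ t) ^ d ≠ 0 := (pow_pos (hγ0 t) d).ne'
    have : γ t ^ (2 * d) = γ t ^ d * γ t ^ d := by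
      rw [two_mul, pow_add]
    rw [this]
    field_simp
  -- assemble
  have key : ∀ᶠ h in nhdsWithin (0 : ℝ) (Set.Ioi 0),
      (fun h : ℝ => ∫ v, g h v) h =
      (h ^ d)⁻¹ * ∫ s : EuclideanSpace ℝ (Fin d),
        γ s ^ (2 * d) * f s * K (h⁻¹ • (γ s • (t - s))) ^ 2 := by
    filter_upwards [self_mem_nhdsWithin] with h hh
    exact (step1 h hh).symm
  rw [step3] at step2
  exact step2.congr' key
end
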